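/- The Alexander-dual ideal I_{Δ^∨} has linear relations if and only if, for every pair of facets F, G of Δ, the subcomplex Δ^{(F,G)} is connected in codimension one. -/

import Mathlib

open MvPolynomial Finset

attribute [local instance] Classical.propDecidable

/-- The (first linear) syzygy graph of a squarefree monomial ideal whose generators
have supports `F i`, all of cardinality `d`: vertices are the generators, and two
generators are adjacent iff their supports meet in `d - 1` elements (equivalently,
there are variables `x, y` with `x * u i = y * u j`). -/
def syzGraph {n m : ℕ} (F : Fin m → Finset (Fin n)) (d : ℕ) : SimpleGraph (Fin m) where
  Adj i j := i ≠ j ∧ (F i ∩ F j).card + 1 = d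
  symm := by
    constructor
    intro i j h
    exact ⟨h.1.symm, by rw [Finset.inter_comm]; exact h.2⟩
  loopless := by constructor; intro i h; exact h.1 rfl

/-- The map `φ : S^ι → S`, `e i ↦ u i`. -/
noncomputable def phi {R : Type*} [CommRing R] {ι : Type*} [Fintype ι] (u : ι → R) :
    (ι → R) →ₗ[R] R where
  toFun c := ∑ i, c i * u i
  map_add' a b := by simp [add_mul, Finset.sum_add_distrib]
  map_smul' r a := by simp [Finset.mul_sum, mul_assoc]

/-- The set of linear syzygies `x_a e_i - x_b e_j` with `x_a u_i = x_b u_j`. -/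
def linSyz {k : Type*} [Field k] {n : ℕ} {ι : Type*} [DecidableEq ι]
    (u : ι → MvPolynomial (Fin n) k) : Set (ι → MvPolynomial (Fin n) k) :=
  { w | ∃ (i j : ι) (a b : Fin n), X a * u i = X b * u j ∧
      w = Pi.single i (X a) - Pi.single j (X b) }

/-- `I = (u i : i)` has linear relations: `ker φ` is generated by the linear syzygies. -/
def HasLinRel {k : Type*} [Field k] {n : ℕ} {ι : Type*} [Fintype ι] [DecidableEq ι]
    (u : ι → MvPolynomial (Fin n) k) : Prop :=
  Submodule.span (MvPolynomial (Fin n) k) (linSyz u) = LinearMap.ker (phi u)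

/-- `I = (u 1, …, u m)` has linear quotients: for some ordering of the generators, each
colon ideal `(u_{σ 1}, …, u_{σ (i-1)}) : u_{σ i}` is generated by a subset of the variables. -/
def LinQuot {k : Type*} [Field k] {n m : ℕ} (u : Fin m → MvPolynomial (Fin n) k) : Prop :=
  ∃ σ : Equiv.Perm (Fin m), ∀ i : Fin m, i.val ≠ 0 →
    ∃ T : Set (Fin n),
      Submodule.colon (Ideal.span ((fun j => u (σ j)) '' {j : Fin m | j < i}))
        (Ideal.span {u (σ i)}) = Ideal.span (X '' T)

/-- Variable-decomposability of a monomial ideal given by its (finite) minimal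
generating set `G`: either `G` is a singleton (principal ideal), or there is a shedding
variable `x l` such that both `I_{x l}` and `I^{x l}` are variable-decomposable. -/
inductive VarDecomp {k : Type*} [Field k] {n : ℕ} :
    Finset (MvPolynomial (Fin n) k) → Prop
  | principal (u : MvPolynomial (Fin n) k) : VarDecomp {u}
  | shed (G : Finset (MvPolynomial (Fin n) k)) (l : Fin n)
      (hne : (G.filter fun u => ¬ X l ∣ u).Nonempty)
      (hshed : ∀ u ∈ G.filter (fun u => ¬ X l ∣ u),
        ∃ v ∈ G.filter (fun u => X l ∣ u),
          Submodule.colon (Ideal.span {v}) (Ideal.span {u}) = Ideal.span {X l})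
      (h1 : VarDecomp (G.filter fun u => ¬ X l ∣ u))
      (h2 : VarDecomp (G.filter fun u => X l ∣ u)) : VarDecomp G

namespace Stmt17Aux

variable {k : Type*} [Field k] {n : ℕ}

noncomputable def ind (F : Finset (Fin n)) : Fin n →₀ ℕ := ∑ a ∈ F, Finsupp.single a 1

lemma ind_apply (F : Finset (Fin n)) (x : Fin n) : ind F x = if x ∈ F then 1 else 0 := by
  classical
  rw [ind, Finsupp.finset_sum_apply]
  simp [Finsupp.single_apply]

lemma prodX (F : Finset (Fin n)) :
    (∏ a ∈ F, (X a : MvPolynomial (Fin n) k)) = monomial (ind F) 1 := by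
  classical
  induction F using Finset.induction with
  | empty => simp [ind]
  | @insert a s ha ih =>
      rw [Finset.prod_insert ha, ih, X, monomial_mul, one_mul]
      congr 1
      rw [ind, ind, Finset.sum_insert ha]

lemma phi_apply {m : ℕ} (u : Fin m → MvPolynomial (Fin n) k)
    (w : Fin m → MvPolynomial (Fin n) k) : phi u w = ∑ t, w t * u t := rfl

lemma phi_single {m : ℕ} (u : Fin m → MvPolynomial (Fin n) k) (i : Fin m)
    (p : MvPolynomial (Fin n) k) : phi u (Pi.single i p) = p * u i := by
  classical
  rw [phi_apply, Finset.sum_eq_single i]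
  · simp
  · intro t _ ht; simp [Pi.single_eq_of_ne ht]
  · simp

end Stmt17Aux

namespace Stmt17Aux
variable {k : Type*} [Field k] {n m : ℕ}

noncomputable def Ebas (i : Fin m) (d : Fin n →₀ ℕ) : Fin m → MvPolynomial (Fin n) k :=
  Pi.single i (monomial d 1)

def Bset (u : Fin m → MvPolynomial (Fin n) k) : Set (Fin m → MvPolynomial (Fin n) k) :=
  {w | ∃ i j d e, monomial d (1:k) * u i = monomial e (1:k) * u j ∧ w = Ebas i d - Ebas j e}

lemma Bset_subset_ker (u : Fin m → MvPolynomial (Fin n) k) :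
    Bset u ⊆ (LinearMap.ker (phi u) : Set (Fin m → MvPolynomial (Fin n) k)) := by
  rintro w ⟨i, j, d, e, h, rfl⟩
  simp only [SetLike.mem_coe, LinearMap.mem_ker, map_sub, Ebas, phi_single, h, sub_self]

lemma support_sub_monomial_coeff (p : MvPolynomial (Fin n) k) (d : Fin n →₀ ℕ) :
    (p - monomial d (coeff d p)).support = p.support.erase d := by
  classical
  ext e
  by_cases h : e = d
  · subst h; simp [MvPolynomial.mem_support_iff, coeff_sub, coeff_monomial]
  · simp [MvPolynomial.mem_support_iff, coeff_sub, coeff_monomial, h, Ne.symm h]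

lemma ker_le_spanB (du : Fin m → (Fin n →₀ ℕ)) :
    LinearMap.ker (phi (fun i => monomial (du i) (1:k))) ≤
      Submodule.span (MvPolynomial (Fin n) k) (Bset (fun i => monomial (du i) (1:k))) := by
  classical
  set u : Fin m → MvPolynomial (Fin n) k := fun i => monomial (du i) (1:k) with hu
  have key : ∀ (N : ℕ) (w : Fin m → MvPolynomial (Fin n) k), phi u w = 0 →
      (∑ t, (w t).support.card) ≤ N → w ∈ Submodule.span (MvPolynomial (Fin n) k) (Bset u) := by
    intro N
    induction N with
    | zero =>
        intro w hker hN
        have : ∀ t, (w t).support.card = 0 := by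
          intro t
          have h1 : (w t).support.card ≤ ∑ t, (w t).support.card := by
            simpa using Finset.single_le_sum (f := fun t => (w t).support.card)
              (fun i _ => Nat.zero_le _) (Finset.mem_univ t)
          omega
        have : w = 0 := by
          funext t
          have h2 := this t
          rw [Finset.card_eq_zero] at h2
          exact MvPolynomial.support_eq_empty.1 h2
        rw [this]; exact Submodule.zero_mem _
    | succ N ih =>
        intro w hker hN
        by_cases hw0 : w = 0
        · rw [hw0]; exact Submodule.zero_mem _
        · obtain ⟨i0, hi0⟩ : ∃ i0, w i0 ≠ 0 := by
            by_contra h; push_neg at h; exact hw0 (funext h)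
          obtain ⟨d0, hd0⟩ := MvPolynomial.support_nonempty.2 hi0
          set D : Fin n →₀ ℕ := d0 + du i0 with hD
          set T : Finset (Fin m) :=
            univ.filter (fun i => du i ≤ D ∧ D - du i ∈ (w i).support) with hT
          set ci : Fin m → k := fun i => coeff (D - du i) (w i) with hci
          have hi0T : i0 ∈ T := by
            rw [hT, Finset.mem_filter]
            refine ⟨Finset.mem_univ _, (le_add_self : du i0 ≤ d0 + du i0), ?_⟩
            rw [hD, add_tsub_cancel_right]
            exact hd0
          have hcsum : ∑ i ∈ T, ci i = 0 := by
            have h0 : coeff D (phi u w) = 0 := by rw [hker]; simp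
            rw [phi_apply] at h0
            rw [MvPolynomial.coeff_sum] at h0
            have h1 : ∀ t : Fin m, coeff D (w t * u t) =
                if du t ≤ D then ci t else 0 := by
              intro t
              rw [hu]
              rw [MvPolynomial.coeff_mul_monomial']
              simp [hci]
            rw [Finset.sum_congr rfl (fun t _ => h1 t)] at h0
            have hstep : (∑ i ∈ T, ci i) = ∑ i ∈ univ.filter (fun i => du i ≤ D), ci i := by
              apply Finset.sum_subset
              · intro i hi
                rw [hT, Finset.mem_filter] at hi
                exact Finset.mem_filter.2 ⟨Finset.mem_univ _, hi.2.1⟩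
              · intro i hi hni
                rw [hT, Finset.mem_filter] at hni
                rw [Finset.mem_filter] at hi
                rw [hci]
                by_contra hc
                exact hni ⟨Finset.mem_univ _, hi.2, MvPolynomial.mem_support_iff.2 hc⟩
            rw [hstep, Finset.sum_filter]
            exact h0
          set v : Fin m → MvPolynomial (Fin n) k :=
            ∑ i ∈ T, (C (ci i) : MvPolynomial (Fin n) k) •
              (Ebas i (D - du i) - Ebas i0 d0 : Fin m → MvPolynomial (Fin n) k) with hv
          have hBmem : ∀ i ∈ T, (Ebas i (D - du i) - Ebas i0 d0 : Fin m → MvPolynomial (Fin n) k) ∈ Bset u := by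
            intro i hi
            rw [hT, Finset.mem_filter] at hi
            refine ⟨i, i0, D - du i, d0, ?_, rfl⟩
            rw [hu]
            simp only [monomial_mul, one_mul]
            rw [tsub_add_cancel_of_le hi.2.1, hD]
          have hvmem : v ∈ Submodule.span (MvPolynomial (Fin n) k) (Bset u) := by
            rw [hv]
            exact Submodule.sum_mem _ (fun i hi =>
              Submodule.smul_mem _ _ (Submodule.subset_span (hBmem i hi)))
          have hvker : phi u v = 0 := by
            have := Bset_subset_ker u
            rw [hv, map_sum]
            apply Finset.sum_eq_zero
            intro i hi
            rw [map_smul]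
            have h2 : phi u (Ebas i (D - du i) - Ebas i0 d0) = 0 :=
              LinearMap.mem_ker.1 (this (hBmem i hi))
            rw [h2, smul_zero]
          have hvt : ∀ t, v t = if t ∈ T then monomial (D - du t) (ci t) else 0 := by
            intro t
            rw [hv]
            rw [Finset.sum_apply]
            have h3 : ∀ i ∈ T, ((C (ci i) : MvPolynomial (Fin n) k) •
                (Ebas i (D - du i) - Ebas i0 d0 : Fin m → MvPolynomial (Fin n) k)) t =
                (if t = i then monomial (D - du i) (ci i) else 0)
                  - C (ci i) * (Ebas i0 d0 t : MvPolynomial (Fin n) k) := by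
              intro i _
              by_cases h : t = i <;>
                simp [Ebas, Pi.single_apply, h, smul_eq_mul, MvPolynomial.C_mul_monomial, mul_sub]
            rw [Finset.sum_congr rfl h3, Finset.sum_sub_distrib]
            rw [Finset.sum_ite_eq T t (fun i => monomial (D - du i) (ci i))]
            rw [← Finset.sum_mul, ← map_sum, hcsum, map_zero, zero_mul, sub_zero]
          set w' : Fin m → MvPolynomial (Fin n) k := w - v with hw'
          have hw't : ∀ t, w' t = w t - (if t ∈ T then monomial (D - du t) (ci t) else 0) := by
            intro t; rw [hw', Pi.sub_apply, hvt t]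
          have hsupp : ∀ t, (w' t).support =
              if t ∈ T then (w t).support.erase (D - du t) else (w t).support := by
            intro t
            rw [hw't t]
            split
            · exact support_sub_monomial_coeff (w t) (D - du t)
            · rw [sub_zero]
          have hmeas : (∑ t, (w' t).support.card) < ∑ t, (w t).support.card := by
            apply Finset.sum_lt_sum
            · intro t _
              rw [hsupp t]
              split
              · exact Finset.card_le_card (Finset.erase_subset _ _)
              · exact le_rfl
            · refine ⟨i0, Finset.mem_univ _, ?_⟩
              rw [hsupp i0, if_pos hi0T]
              apply Finset.card_erase_lt_of_mem
              rw [hD, add_tsub_cancel_right]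
              exact hd0
          have hw'ker : phi u w' = 0 := by
            rw [hw', map_sub, hker, hvker, sub_zero]
          have hw'mem := ih w' hw'ker (by omega)
          have : w = w' + v := by rw [hw']; ring
          rw [this]
          exact Submodule.add_mem _ hw'mem hvmem
  intro w hw
  exact key _ w (LinearMap.mem_ker.1 hw) le_rfl

end Stmt17Aux

namespace Stmt17Aux
variable {k : Type*} [Field k] {n m c : ℕ}

noncomputable def uF (Fc : Fin m → Finset (Fin n)) : Fin m → MvPolynomial (Fin n) k :=
  fun i => ∏ a ∈ Finset.univ \ Fc i, X a

lemma uF_eq (Fc : Fin m → Finset (Fin n)) (i : Fin m) :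
    (uF Fc i : MvPolynomial (Fin n) k) = monomial (ind (univ \ Fc i)) 1 := prodX _

lemma smul_single (p q : MvPolynomial (Fin n) k) (i : Fin m) :
    p • (Pi.single i q : Fin m → MvPolynomial (Fin n) k) = Pi.single i (p * q) := by
  funext t
  by_cases h : t = i <;> simp [Pi.single_apply, h]

lemma ind_insert (x : Fin n) (s : Finset (Fin n)) (h : x ∉ s) :
    ind (insert x s) = Finsupp.single x 1 + ind s := by
  rw [ind, ind, Finset.sum_insert h]

lemma step_mem (Fc : Fin m → Finset (Fin n)) (hpure : ∀ i, (Fc i).card = c)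
    (A' : Finset (Fin n)) (P P' : Fin m) (hAP : A' ⊆ Fc P) (hAP' : A' ⊆ Fc P')
    (hadj : (syzGraph Fc c).Adj P P') :
    (Ebas P (ind (Fc P \ A')) - Ebas P' (ind (Fc P' \ A')) : Fin m → MvPolynomial (Fin n) k)
      ∈ Submodule.span (MvPolynomial (Fin n) k) (linSyz (uF Fc)) := by
  classical
  obtain ⟨hne, hcard⟩ := hadj
  have hx1 : (Fc P \ Fc P').card = 1 := by
    have := Finset.card_inter_add_card_sdiff (Fc P) (Fc P')
    rw [hpure P] at this
    omega
  have hy1 : (Fc P' \ Fc P).card = 1 := by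
    have := Finset.card_inter_add_card_sdiff (Fc P') (Fc P)
    rw [hpure P', Finset.inter_comm] at this
    omega
  obtain ⟨x, hx⟩ := Finset.card_eq_one.1 hx1
  obtain ⟨y, hy⟩ := Finset.card_eq_one.1 hy1
  have hxP : x ∈ Fc P := (Finset.mem_sdiff.1 (hx ▸ Finset.mem_singleton_self x)).1
  have hxP' : x ∉ Fc P' := (Finset.mem_sdiff.1 (hx ▸ Finset.mem_singleton_self x)).2
  have hyP' : y ∈ Fc P' := (Finset.mem_sdiff.1 (hy ▸ Finset.mem_singleton_self y)).1
  have hyP : y ∉ Fc P := (Finset.mem_sdiff.1 (hy ▸ Finset.mem_singleton_self y)).2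
  have hPx : ∀ a, a ∈ Fc P → a ≠ x → a ∈ Fc P' := by
    intro a ha hax
    by_contra hc
    have : a ∈ Fc P \ Fc P' := Finset.mem_sdiff.2 ⟨ha, hc⟩
    rw [hx, Finset.mem_singleton] at this
    exact hax this
  have hP'y : ∀ a, a ∈ Fc P' → a ≠ y → a ∈ Fc P := by
    intro a ha hay
    by_contra hc
    have : a ∈ Fc P' \ Fc P := Finset.mem_sdiff.2 ⟨ha, hc⟩
    rw [hy, Finset.mem_singleton] at this
    exact hay this
  have hxA : x ∉ A' := fun h => hxP' (hAP' h)
  have hyA : y ∉ A' := fun h => hyP (hAP h)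
  have hE : (univ \ Fc P).erase y = (univ \ Fc P').erase x := by
    ext a
    simp only [Finset.mem_erase, Finset.mem_sdiff, Finset.mem_univ, true_and]
    constructor
    · rintro ⟨h1, h2⟩
      exact ⟨fun h => h2 (h ▸ hxP), fun h => h2 (hP'y a h h1)⟩
    · rintro ⟨h1, h2⟩
      exact ⟨fun h => h2 (h ▸ hyP'), fun h => h2 (hPx a h h1)⟩
  -- the linear syzygy
  have hXs : (X x : MvPolynomial (Fin n) k) * uF Fc P = X y * uF Fc P' := by
    rw [uF_eq, uF_eq, X, X, monomial_mul, monomial_mul, one_mul]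
    congr 1
    have hyU : y ∈ univ \ Fc P := Finset.mem_sdiff.2 ⟨Finset.mem_univ _, hyP⟩
    have hxU : x ∈ univ \ Fc P' := Finset.mem_sdiff.2 ⟨Finset.mem_univ _, hxP'⟩
    have h1 : (univ \ Fc P) = insert y ((univ \ Fc P).erase y) := (Finset.insert_erase hyU).symm
    have h2 : (univ \ Fc P') = insert x ((univ \ Fc P').erase x) := (Finset.insert_erase hxU).symm
    rw [h1, ind_insert _ _ (Finset.notMem_erase _ _), h2,
      ind_insert _ _ (Finset.notMem_erase _ _), hE]
    abel
  have hsyz : (Pi.single P (X x) - Pi.single P' (X y) : Fin m → MvPolynomial (Fin n) k)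
      ∈ linSyz (uF Fc) := ⟨P, P', x, y, hXs, rfl⟩
  have hIx : (Fc P ∩ Fc P') \ A' = (Fc P \ A').erase x := by
    ext a
    simp only [Finset.mem_erase, Finset.mem_sdiff, Finset.mem_inter]
    constructor
    · rintro ⟨⟨h1, h2⟩, h3⟩
      exact ⟨fun h => hxP' (h ▸ h2), h1, h3⟩
    · rintro ⟨h1, h2, h3⟩
      exact ⟨⟨h2, hPx a h2 h1⟩, h3⟩
  have hIy : (Fc P ∩ Fc P') \ A' = (Fc P' \ A').erase y := by
    ext a
    simp only [Finset.mem_erase, Finset.mem_sdiff, Finset.mem_inter]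
    constructor
    · rintro ⟨⟨h1, h2⟩, h3⟩
      exact ⟨fun h => hyP (h ▸ h1), h2, h3⟩
    · rintro ⟨h1, h2, h3⟩
      exact ⟨⟨hP'y a h2 h1, h2⟩, h3⟩
  have e1 : (monomial (ind ((Fc P ∩ Fc P') \ A')) 1 : MvPolynomial (Fin n) k) * X x =
      monomial (ind (Fc P \ A')) 1 := by
    rw [X, monomial_mul, mul_one]
    congr 1
    have hxm : x ∈ Fc P \ A' := Finset.mem_sdiff.2 ⟨hxP, hxA⟩
    conv_rhs => rw [show Fc P \ A' = insert x ((Fc P \ A').erase x) from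
      (Finset.insert_erase hxm).symm]
    rw [ind_insert _ _ (Finset.notMem_erase _ _), hIx, add_comm]
  have e2 : (monomial (ind ((Fc P ∩ Fc P') \ A')) 1 : MvPolynomial (Fin n) k) * X y =
      monomial (ind (Fc P' \ A')) 1 := by
    rw [X, monomial_mul, mul_one]
    congr 1
    have hym : y ∈ Fc P' \ A' := Finset.mem_sdiff.2 ⟨hyP', hyA⟩
    conv_rhs => rw [show Fc P' \ A' = insert y ((Fc P' \ A').erase y) from
      (Finset.insert_erase hym).symm]
    rw [ind_insert _ _ (Finset.notMem_erase _ _), hIy, add_comm]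
  have key : (Ebas P (ind (Fc P \ A')) - Ebas P' (ind (Fc P' \ A')) :
      Fin m → MvPolynomial (Fin n) k) =
      (monomial (ind ((Fc P ∩ Fc P') \ A')) 1 : MvPolynomial (Fin n) k) •
        (Pi.single P (X x) - Pi.single P' (X y)) := by
    rw [smul_sub, smul_single, smul_single, e1, e2]
    rfl
  rw [key]
  exact Submodule.smul_mem _ _ (Submodule.subset_span hsyz)

lemma walk_mem (Fc : Fin m → Finset (Fin n)) (hpure : ∀ i, (Fc i).card = c)
    (A' : Finset (Fin n)) (p q : {t : Fin m | A' ⊆ Fc t})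
    (w : ((syzGraph Fc c).induce {t : Fin m | A' ⊆ Fc t}).Walk p q) :
    (Ebas p.1 (ind (Fc p.1 \ A')) - Ebas q.1 (ind (Fc q.1 \ A')) :
        Fin m → MvPolynomial (Fin n) k)
      ∈ Submodule.span (MvPolynomial (Fin n) k) (linSyz (uF Fc)) := by
  induction w with
  | nil => rw [sub_self]; exact Submodule.zero_mem _
  | @cons p p' q hadj w ih =>
      have hstep := step_mem (k := k) Fc hpure A' p.1 p'.1 p.2 p'.2 (SimpleGraph.comap_adj.1 hadj)
      have : (Ebas p.1 (ind (Fc p.1 \ A')) - Ebas q.1 (ind (Fc q.1 \ A')) :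
          Fin m → MvPolynomial (Fin n) k) =
          (Ebas p.1 (ind (Fc p.1 \ A')) - Ebas p'.1 (ind (Fc p'.1 \ A'))) +
          (Ebas p'.1 (ind (Fc p'.1 \ A')) - Ebas q.1 (ind (Fc q.1 \ A'))) := by ring
      rw [this]
      exact Submodule.add_mem _ hstep ih

end Stmt17Aux

namespace Stmt17Aux
variable {k : Type*} [Field k] {n m c : ℕ}

lemma linSyz_le_ker (Fc : Fin m → Finset (Fin n)) :
    Submodule.span (MvPolynomial (Fin n) k) (linSyz (uF Fc)) ≤
      LinearMap.ker (phi (uF Fc : Fin m → MvPolynomial (Fin n) k)) := by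
  rw [Submodule.span_le]
  rintro w ⟨i, j, x, y, hxy, rfl⟩
  simp only [SetLike.mem_coe, LinearMap.mem_ker, map_sub, phi_single, hxy, sub_self]

lemma Bset_sub_span (Fc : Fin m → Finset (Fin n)) (hpure : ∀ i, (Fc i).card = c)
    (hconn : ∀ a b : Fin m,
      ((syzGraph Fc c).induce {i : Fin m | Fc a ∩ Fc b ⊆ Fc i}).Connected) :
    Bset (uF Fc : Fin m → MvPolynomial (Fin n) k) ⊆
      (Submodule.span (MvPolynomial (Fin n) k)
        (linSyz (uF Fc : Fin m → MvPolynomial (Fin n) k)) :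
          Set (Fin m → MvPolynomial (Fin n) k)) := by
  classical
  rintro w ⟨i, j, d, e, hmul, rfl⟩
  rw [uF_eq, uF_eq, monomial_mul, monomial_mul, mul_one] at hmul
  have hde : d + ind (univ \ Fc i) = e + ind (univ \ Fc j) :=
    (((monomial_eq_monomial_iff _ _ _ _).1 hmul).resolve_right (by simp)).1
  by_cases hij : i = j
  · subst hij
    have hd : d = e := add_right_cancel hde
    subst hd
    rw [sub_self]
    exact Submodule.zero_mem _
  · have claim1 : ind (Fc i \ Fc j) ≤ d := by
      rw [Finsupp.le_def]
      intro a
      have hh := DFunLike.congr_fun hde a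
      simp only [Finsupp.add_apply, ind_apply, Finset.mem_sdiff, Finset.mem_univ,
        true_and] at hh ⊢
      by_cases h1 : a ∈ Fc i <;> by_cases h2 : a ∈ Fc j <;> simp [h1, h2] at hh ⊢ <;> omega
    have claim2 : d - ind (Fc i \ Fc j) + ind (Fc i \ Fc j) = d := tsub_add_cancel_of_le claim1
    have claim3 : d - ind (Fc i \ Fc j) + ind (Fc j \ Fc i) = e := by
      ext a
      have hh := DFunLike.congr_fun hde a
      simp only [Finsupp.add_apply, Finsupp.tsub_apply, ind_apply, Finset.mem_sdiff,
        Finset.mem_univ, true_and] at hh ⊢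
      by_cases h1 : a ∈ Fc i <;> by_cases h2 : a ∈ Fc j <;> simp [h1, h2] at hh ⊢ <;> omega
    have hAi : Fc i \ (Fc i ∩ Fc j) = Fc i \ Fc j := by
      ext a; simp only [Finset.mem_sdiff, Finset.mem_inter]; tauto
    have hAj : Fc j \ (Fc i ∩ Fc j) = Fc j \ Fc i := by
      ext a; simp only [Finset.mem_sdiff, Finset.mem_inter]; tauto
    have hiV : i ∈ {t : Fin m | Fc i ∩ Fc j ⊆ Fc t} := by
      simp only [Set.mem_setOf_eq]; exact Finset.inter_subset_left
    have hjV : j ∈ {t : Fin m | Fc i ∩ Fc j ⊆ Fc t} := by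
      simp only [Set.mem_setOf_eq]; exact Finset.inter_subset_right
    obtain ⟨wk⟩ := (hconn i j).preconnected ⟨i, hiV⟩ ⟨j, hjV⟩
    have hmem := walk_mem (k := k) Fc hpure (Fc i ∩ Fc j) ⟨i, hiV⟩ ⟨j, hjV⟩ wk
    have keyw : (Ebas i d - Ebas j e : Fin m → MvPolynomial (Fin n) k) =
        (monomial (d - ind (Fc i \ Fc j)) (1:k)) •
          (Ebas i (ind (Fc i \ (Fc i ∩ Fc j))) - Ebas j (ind (Fc j \ (Fc i ∩ Fc j))) :
            Fin m → MvPolynomial (Fin n) k) := by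
      rw [smul_sub]
      unfold Ebas
      rw [smul_single, smul_single, monomial_mul, monomial_mul, mul_one, hAi, hAj,
        claim2, claim3]
    rw [SetLike.mem_coe, keyw]
    exact Submodule.smul_mem _ _ hmem

lemma backward (Fc : Fin m → Finset (Fin n)) (hpure : ∀ i, (Fc i).card = c)
    (hconn : ∀ a b : Fin m,
      ((syzGraph Fc c).induce {i : Fin m | Fc a ∩ Fc b ⊆ Fc i}).Connected) :
    HasLinRel (uF Fc : Fin m → MvPolynomial (Fin n) k) := by
  apply le_antisymm (linSyz_le_ker Fc)
  have huu : (uF Fc : Fin m → MvPolynomial (Fin n) k) =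
      fun i => monomial (ind (univ \ Fc i)) (1:k) := funext (uF_eq Fc)
  intro w hw
  have h1 : w ∈ Submodule.span (MvPolynomial (Fin n) k) (Bset (uF Fc)) := by
    rw [huu] at hw ⊢
    exact ker_le_spanB _ hw
  exact Submodule.span_le.2 (Bset_sub_span Fc hpure hconn) h1

end Stmt17Aux

namespace Stmt17Aux
variable {k : Type*} [Field k] {n m c : ℕ}

lemma ind_sub_single (s : Finset (Fin n)) (x : Fin n) :
    ind s - Finsupp.single x 1 = ind (s.erase x) := by
  ext a
  rw [Finsupp.tsub_apply, Finsupp.single_apply, ind_apply, ind_apply]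
  rcases eq_or_ne x a with rfl | h2
  · rw [if_neg (Finset.notMem_erase x s)]
    split <;> simp
  · rw [if_neg h2]
    have hiff : a ∈ s.erase x ↔ a ∈ s := by
      rw [Finset.mem_erase]
      exact ⟨And.right, fun h => ⟨Ne.symm h2, h⟩⟩
    rw [if_congr hiff rfl rfl]
    omega

lemma mem_support_ind (s : Finset (Fin n)) (x : Fin n) :
    x ∈ (ind (n := n) s).support ↔ x ∈ s := by
  rw [Finsupp.mem_support_iff, ind_apply]
  split <;> simp_all

lemma reach_of_linrel (Fc : Fin m → Finset (Fin n)) (hinj : Function.Injective Fc)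
    (hpure : ∀ i, (Fc i).card = c)
    (hlin : HasLinRel (uF Fc : Fin m → MvPolynomial (Fin n) k)) (a b : Fin m)
    (haV : a ∈ {t : Fin m | Fc a ∩ Fc b ⊆ Fc t})
    (hbV : b ∈ {t : Fin m | Fc a ∩ Fc b ⊆ Fc t}) :
    ((syzGraph Fc c).induce {t : Fin m | Fc a ∩ Fc b ⊆ Fc t}).Reachable ⟨a, haV⟩ ⟨b, hbV⟩ := by
  classical
  set A : Finset (Fin n) := Fc a ∩ Fc b with hA
  set V : Set (Fin m) := {t : Fin m | Fc a ∩ Fc b ⊆ Fc t} with hV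
  set G' := (syzGraph Fc c).induce V with hG'
  set Cpred : Fin m → Prop := fun t => ∃ h : t ∈ V, G'.Reachable ⟨a, haV⟩ ⟨t, h⟩ with hCpred
  set Cfin : Finset (Fin m) := univ.filter Cpred with hCfin
  have hCfin_mem : ∀ t, t ∈ Cfin ↔ Cpred t := by
    intro t; rw [hCfin, Finset.mem_filter]; simp
  have hCsubV : ∀ t, t ∈ Cfin → A ⊆ Fc t := by
    intro t ht; exact ((hCfin_mem t).1 ht).1
  set δ : Fin m → (Fin n →₀ ℕ) := fun t => ind (Fc t \ A) with hδ
  set ψ : (Fin m → MvPolynomial (Fin n) k) →ₗ[k] k :=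
    ∑ t ∈ Cfin, ((MvPolynomial.lcoeff k (δ t)).comp (LinearMap.proj t)) with hψ
  have ψ_apply : ∀ w : Fin m → MvPolynomial (Fin n) k,
      ψ w = ∑ t ∈ Cfin, coeff (δ t) (w t) := by
    intro w
    rw [hψ, LinearMap.sum_apply]
    apply Finset.sum_congr rfl
    intro t _
    simp [MvPolynomial.lcoeff_apply]
  -- ψ kills all S-multiples of linear syzygies
  have ψ_syz : ∀ (r : MvPolynomial (Fin n) k) (s : Fin m → MvPolynomial (Fin n) k),
      s ∈ linSyz (uF Fc) → ψ (r • s) = 0 := by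
    rintro r s ⟨i, j, x, y, hxy, rfl⟩
    have hsplit : ψ (r • (Pi.single i (X x) - Pi.single j (X y) :
        Fin m → MvPolynomial (Fin n) k)) =
        (if i ∈ Cfin then coeff (δ i) (r * X x) else 0) -
        (if j ∈ Cfin then coeff (δ j) (r * X y) else 0) := by
      rw [ψ_apply]
      have hterm : ∀ t ∈ Cfin,
          coeff (δ t) ((r • (Pi.single i (X x) - Pi.single j (X y) :
            Fin m → MvPolynomial (Fin n) k)) t) =
          (if t = i then coeff (δ t) (r * X x) else 0) -
          (if t = j then coeff (δ t) (r * X y) else 0) := by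
        intro t _
        have hev : (r • (Pi.single i (X x) - Pi.single j (X y) :
            Fin m → MvPolynomial (Fin n) k)) t =
            r * (if t = i then (X x : MvPolynomial (Fin n) k) else 0) -
            r * (if t = j then (X y : MvPolynomial (Fin n) k) else 0) := by
          simp [Pi.single_apply, mul_sub]
        rw [hev, coeff_sub]
        congr 1 <;> split <;> simp
      rw [Finset.sum_congr rfl hterm, Finset.sum_sub_distrib,
        Finset.sum_ite_eq' Cfin i (fun t => coeff (δ t) (r * X x)),
        Finset.sum_ite_eq' Cfin j (fun t => coeff (δ t) (r * X y))]
    rw [hsplit]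
    by_cases hij : i = j
    · subst hij
      have hune : (uF Fc i : MvPolynomial (Fin n) k) ≠ 0 := by
        rw [uF_eq]
        simp [MvPolynomial.monomial_eq_zero]
      have hXeq : (X x : MvPolynomial (Fin n) k) = X y := mul_right_cancel₀ hune hxy
      have hxy' : x = y := MvPolynomial.X_injective hXeq
      subst hxy'
      simp
    · -- the combinatorial heart
      have hde : Finsupp.single x 1 + ind (univ \ Fc i) =
          Finsupp.single y 1 + ind (univ \ Fc j) := by
        have h6 := hxy
        rw [uF_eq, uF_eq, X, X, monomial_mul, monomial_mul, one_mul] at h6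
        exact (((monomial_eq_monomial_iff _ _ _ _).1 h6).resolve_right (by simp)).1
      have hxyne : x ≠ y := by
        intro hh
        subst hh
        have h2 : ind (univ \ Fc i) = ind (univ \ Fc j) := add_left_cancel hde
        have h3 : Fc i = Fc j := by
          ext a'
          have h6 := DFunLike.congr_fun h2 a'
          rw [ind_apply, ind_apply] at h6
          simp only [Finset.mem_sdiff, Finset.mem_univ, true_and] at h6
          constructor
          · intro h7; by_contra h8
            rw [if_neg (not_not_intro h7), if_pos h8] at h6; omega
          · intro h7; by_contra h8
            rw [if_pos h8, if_neg (not_not_intro h7)] at h6; omega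
        exact hij (hinj h3)
      have hfact : ∀ a', Finsupp.single x 1 a' + ind (univ \ Fc i) a' =
          Finsupp.single y 1 a' + ind (univ \ Fc j) a' := fun a' => DFunLike.congr_fun hde a'
      have hxFi : x ∈ Fc i := by
        by_contra h1
        have h5 := hfact x
        rw [Finsupp.single_eq_same, Finsupp.single_eq_of_ne' (fun hh : y = x => hxyne hh.symm),
          ind_apply, ind_apply] at h5
        simp only [Finset.mem_sdiff, Finset.mem_univ, true_and] at h5
        rw [if_pos h1] at h5
        split_ifs at h5 <;> omega
      have hxFj : x ∉ Fc j := by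
        intro h2
        have h5 := hfact x
        rw [Finsupp.single_eq_same, Finsupp.single_eq_of_ne' (fun hh : y = x => hxyne hh.symm),
          ind_apply, ind_apply] at h5
        simp only [Finset.mem_sdiff, Finset.mem_univ, true_and] at h5
        rw [if_neg (not_not_intro h2)] at h5
        split_ifs at h5 <;> omega
      have hyFj : y ∈ Fc j := by
        by_contra h1
        have h5 := hfact y
        rw [Finsupp.single_eq_same, Finsupp.single_eq_of_ne' (fun hh : x = y => hxyne hh),
          ind_apply, ind_apply] at h5
        simp only [Finset.mem_sdiff, Finset.mem_univ, true_and] at h5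
        rw [if_pos h1] at h5
        split_ifs at h5 <;> omega
      have hyFi : y ∉ Fc i := by
        intro h2
        have h5 := hfact y
        rw [Finsupp.single_eq_same, Finsupp.single_eq_of_ne' (fun hh : x = y => hxyne hh),
          ind_apply, ind_apply] at h5
        simp only [Finset.mem_sdiff, Finset.mem_univ, true_and] at h5
        rw [if_neg (not_not_intro h2)] at h5
        split_ifs at h5 <;> omega
      have hiff : ∀ a', a' ≠ x → a' ≠ y → (a' ∈ Fc i ↔ a' ∈ Fc j) := by
        intro a' hax hay
        have h5 := hfact a'
        rw [Finsupp.single_eq_of_ne' (fun hh : x = a' => hax hh.symm),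
          Finsupp.single_eq_of_ne' (fun hh : y = a' => hay hh.symm),
          ind_apply, ind_apply] at h5
        simp only [Finset.mem_sdiff, Finset.mem_univ, true_and] at h5
        constructor
        · intro h7; by_contra h8
          rw [if_neg (not_not_intro h7), if_pos h8] at h5; omega
        · intro h7; by_contra h8
          rw [if_pos h8, if_neg (not_not_intro h7)] at h5; omega
      have hedge : ∀ (hiA : A ⊆ Fc i) (hjA : A ⊆ Fc j), (syzGraph Fc c).Adj i j := by
        intro hiA hjA
        refine ⟨hij, ?_⟩
        have hint : Fc i ∩ Fc j = (Fc i).erase x := by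
          ext a'
          simp only [Finset.mem_inter, Finset.mem_erase]
          constructor
          · rintro ⟨h1, h2⟩
            exact ⟨fun hh => hxFj (hh ▸ h2), h1⟩
          · rintro ⟨h1, h2⟩
            have hay : a' ≠ y := fun hh => hyFi (hh ▸ h2)
            exact ⟨h2, (hiff a' h1 hay).1 h2⟩
        rw [hint, Finset.card_erase_of_mem hxFi, hpure i]
        have : 1 ≤ c := by
          rw [← hpure i]
          exact Finset.card_pos.2 ⟨x, hxFi⟩
        omega
      have hnext : i ∈ Cfin → x ∉ A → j ∈ Cfin := by
        intro ht hxA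
        have htA : A ⊆ Fc i := hCsubV i ht
        have hjA : A ⊆ Fc j := by
          intro a' ha'
          have h1 : a' ∈ Fc i := htA ha'
          have hax : a' ≠ x := fun hh => hxA (hh ▸ ha')
          have hay : a' ≠ y := fun hh => hyFi (hh ▸ h1)
          exact (hiff a' hax hay).1 h1
        obtain ⟨htV, hreach⟩ := (hCfin_mem i).1 ht
        rw [hCfin_mem]
        refine ⟨hjA, hreach.trans (SimpleGraph.Adj.reachable ?_)⟩
        exact SimpleGraph.comap_adj.2 (hedge htA hjA)
      have hprev : j ∈ Cfin → y ∉ A → i ∈ Cfin := by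
        intro ht hyA
        have htA : A ⊆ Fc j := hCsubV j ht
        have hiA : A ⊆ Fc i := by
          intro a' ha'
          have h1 : a' ∈ Fc j := htA ha'
          have hay : a' ≠ y := fun hh => hyA (hh ▸ ha')
          have hax : a' ≠ x := fun hh => hxFj (hh ▸ h1)
          exact (hiff a' hax hay).2 h1
        obtain ⟨htV, hreach⟩ := (hCfin_mem j).1 ht
        rw [hCfin_mem]
        refine ⟨hiA, hreach.trans (SimpleGraph.Reachable.symm (SimpleGraph.Adj.reachable ?_))⟩
        exact SimpleGraph.comap_adj.2 (hedge hiA htA)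
      by_cases hiC : i ∈ Cfin <;> by_cases hjC : j ∈ Cfin
      · rw [if_pos hiC, if_pos hjC]
        have hxA : x ∉ A := fun hh => hxFj (hCsubV j hjC hh)
        have hyA : y ∉ A := fun hh => hyFi (hCsubV i hiC hh)
        have hxsupp : x ∈ (δ i).support := by
          rw [hδ]
          rw [mem_support_ind, Finset.mem_sdiff]
          exact ⟨hxFi, hxA⟩
        have hysupp : y ∈ (δ j).support := by
          rw [hδ]
          rw [mem_support_ind, Finset.mem_sdiff]
          exact ⟨hyFj, hyA⟩
        rw [MvPolynomial.coeff_mul_X', MvPolynomial.coeff_mul_X',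
          if_pos hxsupp, if_pos hysupp]
        have hkey : δ i - Finsupp.single x 1 = δ j - Finsupp.single y 1 := by
          rw [hδ]
          simp only
          rw [ind_sub_single, ind_sub_single]
          congr 1
          ext a'
          simp only [Finset.mem_erase, Finset.mem_sdiff]
          constructor
          · rintro ⟨h1, h2, h3⟩
            have hay : a' ≠ y := fun hh => hyFi (hh ▸ h2)
            exact ⟨hay, (hiff a' h1 hay).1 h2, h3⟩
          · rintro ⟨h1, h2, h3⟩
            have hax : a' ≠ x := fun hh => hxFj (hh ▸ h2)
            exact ⟨hax, (hiff a' hax h1).2 h2, h3⟩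
        rw [hkey, sub_self]
      · rw [if_pos hiC, if_neg hjC]
        by_cases hxA : x ∈ A
        · have hxsupp : x ∉ (δ i).support := by
            rw [hδ, mem_support_ind, Finset.mem_sdiff]
            push_neg
            intro _; exact hxA
          rw [MvPolynomial.coeff_mul_X', if_neg hxsupp, sub_zero]
        · exact absurd (hnext hiC hxA) hjC
      · rw [if_neg hiC, if_pos hjC]
        by_cases hyA : y ∈ A
        · have hysupp : y ∉ (δ j).support := by
            rw [hδ, mem_support_ind, Finset.mem_sdiff]
            push_neg
            intro _; exact hyA
          rw [MvPolynomial.coeff_mul_X', if_neg hysupp, zero_sub, neg_zero]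
        · exact absurd (hprev hjC hyA) hiC
      · rw [if_neg hiC, if_neg hjC, sub_zero]
  -- the Taylor syzygy of the pair (a, b)
  set w0 : Fin m → MvPolynomial (Fin n) k := Ebas a (δ a) - Ebas b (δ b) with hw0
  have hw0ker : w0 ∈ LinearMap.ker (phi (uF Fc : Fin m → MvPolynomial (Fin n) k)) := by
    rw [LinearMap.mem_ker, hw0, map_sub]
    unfold Ebas
    rw [phi_single, phi_single, uF_eq, uF_eq, monomial_mul, monomial_mul, one_mul]
    have hexp : ∀ t : Fin m, A ⊆ Fc t → δ t + ind (univ \ Fc t) = ind (univ \ A) := by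
      intro t htA
      ext a'
      rw [Finsupp.add_apply, hδ]
      rw [ind_apply, ind_apply, ind_apply]
      simp only [Finset.mem_sdiff, Finset.mem_univ, true_and]
      by_cases h1 : a' ∈ Fc t <;> by_cases h2 : a' ∈ A
      · simp [h1, h2]
      · simp [h1, h2]
      · exact absurd (htA h2) h1
      · simp [h1, h2]
    rw [hexp a (fun a' ha' => (Finset.mem_inter.1 ha').1),
      hexp b (fun a' ha' => (Finset.mem_inter.1 ha').2), sub_self]
  have hw0span : w0 ∈ Submodule.span (MvPolynomial (Fin n) k)
      (linSyz (uF Fc : Fin m → MvPolynomial (Fin n) k)) := by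
    rw [hlin]; exact hw0ker
  have hψ0 : ψ w0 = 0 := by
    obtain ⟨N, f, g, hsum⟩ := Submodule.mem_span_set'.1 hw0span
    rw [← hsum, map_sum]
    apply Finset.sum_eq_zero
    intro l _
    exact ψ_syz (f l) (g l).1 (g l).2
  have haC : a ∈ Cfin := by
    rw [hCfin_mem]
    exact ⟨haV, SimpleGraph.Reachable.refl _⟩
  have hψval : ψ w0 = 1 - (if b ∈ Cfin then 1 else 0) := by
    rw [ψ_apply, hw0]
    have hterm : ∀ t ∈ Cfin,
        coeff (δ t) ((Ebas a (δ a) - Ebas b (δ b) : Fin m → MvPolynomial (Fin n) k) t) =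
        (if t = a then (1:k) else 0) - (if t = b then (1:k) else 0) := by
      intro t _
      have hev : (Ebas a (δ a) - Ebas b (δ b) : Fin m → MvPolynomial (Fin n) k) t =
          (if t = a then monomial (δ a) (1:k) else 0) -
          (if t = b then monomial (δ b) (1:k) else 0) := by
        simp [Ebas, Pi.single_apply]
      rw [hev, coeff_sub]
      congr 1
      · rcases eq_or_ne t a with rfl | h
        · rw [if_pos rfl, if_pos rfl, coeff_monomial, if_pos rfl]
        · rw [if_neg h, if_neg h, coeff_zero]
      · rcases eq_or_ne t b with rfl | h
        · rw [if_pos rfl, if_pos rfl, coeff_monomial, if_pos rfl]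
        · rw [if_neg h, if_neg h, coeff_zero]
    rw [Finset.sum_congr rfl hterm, Finset.sum_sub_distrib,
      Finset.sum_ite_eq' Cfin a (fun _ => (1:k)),
      Finset.sum_ite_eq' Cfin b (fun _ => (1:k)), if_pos haC]
  have hbC : b ∈ Cfin := by
    by_contra hbC
    rw [hψ0, if_neg hbC, sub_zero] at hψval
    exact one_ne_zero hψval.symm
  obtain ⟨hbV', hreach⟩ := (hCfin_mem b).1 hbC
  exact hreach

end Stmt17Aux

namespace Stmt17Aux
variable {k : Type*} [Field k] {n m c : ℕ}

def inclHom (G : SimpleGraph (Fin m)) {s t : Set (Fin m)} (h : s ⊆ t) :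
    G.induce s →g G.induce t where
  toFun v := ⟨v.1, h v.2⟩
  map_rel' := fun hadj => hadj

end Stmt17Aux



/-- Let `Δ` be a pure simplicial complex with facets `Fc 0, …, Fc (m-1)`,
all of cardinality `c`. The Alexander-dual ideal `I_{Δ^∨}`, generated by the monomials
`x_{complement of Fc i}`, has linear relations iff for every pair of facets `Fc a, Fc b`
the subcomplex `Δ^{(Fc a, Fc b)}` (generated by the facets containing `Fc a ∩ Fc b`) is
connected in codimension one, i.e. the corresponding induced facet graph is connected. -/
theorem stmt17 {k : Type*} [Field k] {n m c : ℕ}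
    (Fc : Fin m → Finset (Fin n)) (hinj : Function.Injective Fc)
    (hpure : ∀ i, (Fc i).card = c) :
    HasLinRel (fun i : Fin m =>
        ∏ a ∈ Finset.univ \ Fc i, (X a : MvPolynomial (Fin n) k)) ↔
      ∀ a b : Fin m,
        ((syzGraph Fc c).induce {i : Fin m | Fc a ∩ Fc b ⊆ Fc i}).Connected := by
  
  constructor
  · intro h a b
    have haV : a ∈ {t : Fin m | Fc a ∩ Fc b ⊆ Fc t} := Finset.inter_subset_left
    have hbV : b ∈ {t : Fin m | Fc a ∩ Fc b ⊆ Fc t} := Finset.inter_subset_right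
    rw [SimpleGraph.connected_iff]
    refine ⟨?_, ⟨⟨a, haV⟩⟩⟩
    intro p q
    have hsubp : {t : Fin m | Fc a ∩ Fc (p.1) ⊆ Fc t} ⊆ {t : Fin m | Fc a ∩ Fc b ⊆ Fc t} := by
      intro t ht z hz
      exact ht (Finset.mem_inter.2 ⟨(Finset.mem_inter.1 hz).1, p.2 hz⟩)
    have hsubq : {t : Fin m | Fc a ∩ Fc (q.1) ⊆ Fc t} ⊆ {t : Fin m | Fc a ∩ Fc b ⊆ Fc t} := by
      intro t ht z hz
      exact ht (Finset.mem_inter.2 ⟨(Finset.mem_inter.1 hz).1, q.2 hz⟩)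
    have hp := Stmt17Aux.reach_of_linrel (k := k) Fc hinj hpure h a p.1
      Finset.inter_subset_left Finset.inter_subset_right
    have hq := Stmt17Aux.reach_of_linrel (k := k) Fc hinj hpure h a q.1
      Finset.inter_subset_left Finset.inter_subset_right
    have hp' := SimpleGraph.Reachable.map (Stmt17Aux.inclHom (syzGraph Fc c) hsubp) hp
    have hq' := SimpleGraph.Reachable.map (Stmt17Aux.inclHom (syzGraph Fc c) hsubq) hq
    exact SimpleGraph.Reachable.trans (SimpleGraph.Reachable.symm hp') hq'
  · intro h
    exact Stmt17Aux.backward (k := k) Fc hpure h
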